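/- For every n ∈ ℕ, the rational number 729^n · (2/9)_n (5/9)_n (8/9)_n / ((2/3)_n · (n!)²) is an integer. (Equivalently, the hypergeometric series ₃F₂([2/9, 5/9, 8/9], [2/3, 1], 3⁶·x) has integer Taylor coefficients: 1 + 120x + 47124x² + 23483460x³ + ⋯.) -/

import Mathlib

open Finset

lemma exists_res (m : ℕ) (hm : 0 < m) (hco : Nat.Coprime 3 m) :
    ∃ r < m, m ∣ 3 * r + 2 := by
  haveI : NeZero m := ⟨hm.ne'⟩
  set x : ZMod m := ((3 : ℕ) : ZMod m)⁻¹ * (-2) with hx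
  refine ⟨x.val, x.val_lt, ?_⟩
  rw [← ZMod.natCast_eq_zero_iff]
  push_cast
  rw [ZMod.natCast_val, ZMod.cast_id, hx]
  have h1 : ((3 : ℕ) : ZMod m) * ((3 : ℕ) : ZMod m)⁻¹ = 1 := ZMod.coe_mul_inv_eq_one 3 hco
  have h3 : ((3 : ℕ) : ZMod m) = (3 : ZMod m) := by push_cast; ring
  rw [h3] at h1
  calc (3 : ZMod m) * (((3:ℕ) : ZMod m)⁻¹ * (-2)) + 2
      = (3 : ZMod m) * ((3:ℕ) : ZMod m)⁻¹ * (-2) + 2 := by ring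
    _ = 0 := by rw [h3, h1]; ring

lemma count_ge (n m : ℕ) (hm : 0 < m) (hco : Nat.Coprime 3 m) :
    2 * n / m ≤ ((Finset.Ico n (3 * n)).filter (fun k => m ∣ 3 * k + 2)).card := by
  obtain ⟨r, hrm, hr⟩ := exists_res m hm hco
  set t := 2 * n / m with ht
  set d := (r + m - n % m) % m with hd
  have hdm : d < m := Nat.mod_lt _ hm
  have hnm : n % m < m := Nat.mod_lt _ hm
  -- m ∣ 3*(n+d)+2
  have hcast : ((n + d : ℕ) : ZMod m) = ((r : ℕ) : ZMod m) := by
    have e1 : ((d : ℕ) : ZMod m) = ((r + m - n % m : ℕ) : ZMod m) := by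
      rw [hd, ZMod.natCast_mod]
    have e2 : ((r + m - n % m : ℕ) : ZMod m) + ((n % m : ℕ) : ZMod m)
        = ((r : ℕ) : ZMod m) + ((m : ℕ) : ZMod m) := by
      rw [← Nat.cast_add, ← Nat.cast_add]
      congr 1
      omega
    have e3 : ((m : ℕ) : ZMod m) = 0 := by
      rw [ZMod.natCast_eq_zero_iff]
    have e4 : ((n % m : ℕ) : ZMod m) = ((n : ℕ) : ZMod m) := ZMod.natCast_mod n m
    rw [Nat.cast_add, e1]
    rw [e3, add_zero] at e2
    rw [← e4, ← e2]
    ring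
  have hdvd0 : m ∣ 3 * (n + d) + 2 := by
    rw [← ZMod.natCast_eq_zero_iff]
    have h0 : ((3 * r + 2 : ℕ) : ZMod m) = 0 := by
      rw [ZMod.natCast_eq_zero_iff]; exact hr
    push_cast at h0 hcast ⊢
    linear_combination h0 + 3 * hcast
  have hmt : m * t ≤ 2 * n := Nat.mul_div_le (2 * n) m
  apply le_trans (le_of_eq (Finset.card_range t).symm)
  apply Finset.card_le_card_of_injOn (fun j => n + d + j * m)
  · intro j hj
    simp only [Finset.mem_coe, Finset.mem_range] at hj
    simp only [Finset.mem_coe, Finset.mem_filter, Finset.mem_Ico]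
    refine ⟨⟨by omega, ?_⟩, ?_⟩
    · have h7 : (j + 1) * m ≤ t * m := Nat.mul_le_mul_right m hj
      have h8 : t * m ≤ 2 * n := by rw [mul_comm]; exact hmt
      nlinarith
    · have h9 : 3 * (n + d + j * m) + 2 = (3 * (n + d) + 2) + m * (3 * j) := by ring
      rw [h9]
      exact dvd_add hdvd0 (Dvd.intro _ rfl)
  · intro a _ b _ hab
    simp only at hab
    have : a * m = b * m := by omega
    exact Nat.eq_of_mul_eq_mul_right hm this

open Finset

lemma fact_legendre {p n b : ℕ} (hp : p.Prime) (hb : Nat.log p n < b) :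
    (Nat.factorial n).factorization p = ∑ i ∈ Ico 1 b, n / p ^ i := by
  apply le_antisymm
  · exact (Nat.Prime.pow_dvd_factorial_iff hp hb).mp (Nat.ordProj_dvd _ _)
  · exact (Nat.Prime.pow_dvd_iff_le_factorization hp (Nat.factorial_ne_zero n)).mp
      ((Nat.Prime.pow_dvd_factorial_iff hp hb).mpr le_rfl)

lemma key (n : ℕ) : (Nat.factorial n) ^ 2 ∣ 3 ^ n * ∏ k ∈ Finset.Ico n (3 * n), (3 * k + 2) := by
  rcases Nat.eq_zero_or_pos n with rfl | hn
  · simp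
  have hPne : ∀ k ∈ Finset.Ico n (3 * n), 3 * k + 2 ≠ 0 := fun k _ => by omega
  have hprod : (∏ k ∈ Finset.Ico n (3 * n), (3 * k + 2)) ≠ 0 :=
    Finset.prod_ne_zero_iff.mpr hPne
  have hN : 3 ^ n * ∏ k ∈ Finset.Ico n (3 * n), (3 * k + 2) ≠ 0 :=
    mul_ne_zero (pow_ne_zero _ (by norm_num)) hprod
  rw [← Nat.factorization_le_iff_dvd (pow_ne_zero _ (Nat.factorial_ne_zero n)) hN]
  intro p
  by_cases hp : p.Prime
  case neg =>
    simp [Nat.factorization_eq_zero_of_not_prime _ hp]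
  -- facts about b
  set b := 9 * n with hb
  have hp2 : 2 ≤ p := hp.two_le
  have h2pb : ∀ m : ℕ, m < 9 * n → m < p ^ b := by
    intro m hm
    calc m < 9 * n := hm
      _ ≤ 2 ^ (9 * n) := Nat.le_of_lt Nat.lt_two_pow_self
      _ ≤ p ^ b := Nat.pow_le_pow_left hp2 _
  have hlog : Nat.log p n < b + 1 := by
    apply Nat.log_lt_of_lt_pow (by omega)
    calc n < p ^ b := h2pb _ (by omega)
      _ ≤ p ^ (b + 1) := Nat.pow_le_pow_right (by omega) (by omega)
  -- LHS
  have hL : ((Nat.factorial n) ^ 2).factorization p = 2 * ∑ i ∈ Icc 1 b, n / p ^ i := by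
    rw [Nat.factorization_pow, Finsupp.smul_apply, smul_eq_mul,
      fact_legendre hp hlog, Finset.Ico_add_one_right_eq_Icc]
  -- RHS
  have hR : (3 ^ n * ∏ k ∈ Finset.Ico n (3 * n), (3 * k + 2)).factorization p
      = n * (3 : ℕ).factorization p
        + ∑ k ∈ Finset.Ico n (3 * n), (3 * k + 2).factorization p := by
    rw [Nat.factorization_mul (pow_ne_zero _ (by norm_num)) hprod,
      Nat.factorization_pow, Nat.factorization_prod hPne]
    simp [Finsupp.smul_apply, Finset.sum_apply']
  rw [hL, hR]
  by_cases hp3 : p = 3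
  case pos =>
    subst hp3
    have hge : 2 * ∑ i ∈ Icc 1 b, n / 3 ^ i ≤ n := by
      have := Nat.geom_sum_Ico_le (by norm_num : 2 ≤ 3) n (b + 1)
      rw [Finset.Ico_add_one_right_eq_Icc] at this
      omega
    have h31 : (3 : ℕ).factorization 3 = 1 := by
      rw [Nat.Prime.factorization (by norm_num)]
      simp
    rw [h31]
    omega
  case neg =>
    have h3f : (3 : ℕ).factorization p = 0 := by
      rw [Nat.Prime.factorization (by norm_num)]
      exact Finsupp.single_eq_of_ne (fun h => hp3 h)
    rw [h3f, mul_zero, zero_add]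
    have hco : Nat.Coprime 3 p := (Nat.coprime_primes (by norm_num) hp).mpr
      (fun h => hp3 h.symm)
    -- per-term valuation as a card over Icc 1 b
    have hterm : ∀ k ∈ Finset.Ico n (3 * n), (3 * k + 2).factorization p
        = ∑ i ∈ Icc 1 b, (if p ^ i ∣ 3 * k + 2 then 1 else 0) := by
      intro k hk
      simp only [Finset.mem_Ico] at hk
      rw [Nat.factorization_eq_card_pow_dvd _ hp,
        Nat.Ico_filter_pow_dvd_eq hp (by omega) (le_of_lt (h2pb _ (by omega))),
        Finset.card_filter]
    rw [Finset.sum_congr rfl hterm, Finset.sum_comm]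
    have hstep : ∀ i ∈ Icc 1 b, 2 * (n / p ^ i)
        ≤ ∑ k ∈ Finset.Ico n (3 * n), (if p ^ i ∣ 3 * k + 2 then 1 else 0) := by
      intro i _
      have hpi : 0 < p ^ i := Nat.pow_pos (by omega)
      have h1 : 2 * (n / p ^ i) ≤ 2 * n / p ^ i := by
        rw [Nat.le_div_iff_mul_le hpi]
        have := Nat.div_mul_le_self n (p ^ i)
        nlinarith
      have h2 := count_ge n (p ^ i) hpi (hco.pow_right i)
      rw [Finset.card_filter] at h2
      omega
    calc 2 * ∑ i ∈ Icc 1 b, n / p ^ i = ∑ i ∈ Icc 1 b, 2 * (n / p ^ i) := by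
          rw [Finset.mul_sum]
      _ ≤ _ := Finset.sum_le_sum hstep

open Finset

lemma poch_prod (c a n : ℕ) (hc : (c : ℚ) ≠ 0) :
    (c : ℚ) ^ n * (ascPochhammer ℚ n).eval ((a : ℚ) / c) =
      ∏ k ∈ range n, ((c * k + a : ℕ) : ℚ) := by
  induction n with
  | zero => simp
  | succ n ih =>
    rw [ascPochhammer_succ_eval, prod_range_succ, ← ih]
    push_cast
    field_simp
    ring

lemma merge_prod (n : ℕ) :
    ((∏ k ∈ range n, (9 * k + 2)) * ∏ k ∈ range n, (9 * k + 5)) * ∏ k ∈ range n, (9 * k + 8)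
      = ∏ k ∈ range (3 * n), (3 * k + 2) := by
  induction n with
  | zero => simp
  | succ n ih =>
    rw [show 3 * (n + 1) = 3 * n + 1 + 1 + 1 by ring]
    rw [prod_range_succ, prod_range_succ, prod_range_succ, prod_range_succ,
      prod_range_succ, prod_range_succ, ← ih]
    ring

theorem hypergeom_2_9_5_9_8_9_integer_coeffs (n : ℕ) :
    ∃ m : ℤ,
      729 ^ n * (ascPochhammer ℚ n).eval (2 / 9) * (ascPochhammer ℚ n).eval (5 / 9) *
          (ascPochhammer ℚ n).eval (8 / 9) /
        ((ascPochhammer ℚ n).eval (2 / 3) * (Nat.factorial n : ℚ) ^ 2) = (m : ℚ) := by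
  set N : ℕ := 3 ^ n * ∏ k ∈ Finset.Ico n (3 * n), (3 * k + 2) with hNdef
  have hdvd : (Nat.factorial n) ^ 2 ∣ N := key n
  refine ⟨((N / (Nat.factorial n) ^ 2 : ℕ) : ℤ), ?_⟩
  have h2 := poch_prod 9 2 n (by norm_num)
  have h5 := poch_prod 9 5 n (by norm_num)
  have h8 := poch_prod 9 8 n (by norm_num)
  have h3 := poch_prod 3 2 n (by norm_num)
  push_cast at h2 h5 h8 h3
  norm_num at h2 h5 h8 h3
  -- nonzero facts
  have hA : (∏ x ∈ range n, (3 * (x : ℚ) + 2)) ≠ 0 := by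
    apply Finset.prod_ne_zero_iff.mpr
    intro k _
    positivity
  have hE : (ascPochhammer ℚ n).eval (2 / 3) ≠ 0 := by
    intro h
    rw [h, mul_zero] at h3
    exact hA h3.symm
  have hF : ((Nat.factorial n : ℚ)) ^ 2 ≠ 0 := by positivity
  -- product splitting over ℚ
  have hsplitN : (∏ k ∈ range (3 * n), (3 * k + 2))
      = (∏ k ∈ range n, (3 * k + 2)) * ∏ k ∈ Finset.Ico n (3 * n), (3 * k + 2) :=
    (Finset.prod_range_mul_prod_Ico _ (by omega : n ≤ 3 * n)).symm
  have hsplitQ := congrArg (Nat.cast : ℕ → ℚ) hsplitN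
  push_cast at hsplitQ
  have hNq := congrArg (Nat.cast : ℕ → ℚ) hNdef
  push_cast at hNq
  have e2 := congrArg (Nat.cast : ℕ → ℚ) (merge_prod n)
  push_cast at e2
  have key1 : (729 : ℚ) ^ n * (ascPochhammer ℚ n).eval (2 / 9) *
        (ascPochhammer ℚ n).eval (5 / 9) * (ascPochhammer ℚ n).eval (8 / 9)
      = (ascPochhammer ℚ n).eval (2 / 3) * (N : ℚ) := by
    have e1 : (729 : ℚ) ^ n = 9 ^ n * 9 ^ n * 9 ^ n := by
      rw [show (729 : ℚ) = 9 * 9 * 9 by norm_num, mul_pow, mul_pow]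
    calc (729 : ℚ) ^ n * (ascPochhammer ℚ n).eval (2 / 9) *
          (ascPochhammer ℚ n).eval (5 / 9) * (ascPochhammer ℚ n).eval (8 / 9)
        = (9 ^ n * (ascPochhammer ℚ n).eval (2 / 9)) *
          (9 ^ n * (ascPochhammer ℚ n).eval (5 / 9)) *
          (9 ^ n * (ascPochhammer ℚ n).eval (8 / 9)) := by rw [e1]; ring
      _ = ((∏ x ∈ range n, (9 * (x:ℚ) + 2)) * ∏ x ∈ range n, (9 * (x:ℚ) + 5)) *
          ∏ x ∈ range n, (9 * (x:ℚ) + 8) := by rw [h2, h5, h8]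
      _ = ∏ x ∈ range (3 * n), (3 * (x:ℚ) + 2) := e2
      _ = (ascPochhammer ℚ n).eval (2 / 3) * (N : ℚ) := by
          rw [hsplitQ, ← h3, hNq]; ring
  rw [key1, mul_div_mul_left _ _ hE]
  have hcast : ((N / Nat.factorial n ^ 2 : ℕ) : ℚ)
      = (N : ℚ) / ((Nat.factorial n : ℚ)) ^ 2 := by
    rw [Nat.cast_div hdvd (by positivity)]
    push_cast
    ring
  rw [Int.cast_natCast, hcast]
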